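/- For every colored tree Γ, the dual cone C(Γ) = {x ∈ ℝ^g : ⟨w_d, x⟩ ≥ 0 for all d ∈ E(Γ)} equals the convex cone generated by G(Γ), i.e. the set of all finite nonnegative real combinations of elements of G(Γ); moreover G(Γ) is a minimal generating set: no proper subset of G(Γ) generates C(Γ) as a convex cone. -/

import Mathlib

noncomputable section
open Classical

/-- A rose tree whose leaves ("colored vertices") carry labels of type `α` and whose
internal vertices ("uncolored vertices") are unlabelled. -/
inductive CTree (α : Type) : Type
  | leaf (a : α) : CTree α
  | node (ts : List (CTree α)) : CTree α

namespace CTree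

variable {α : Type}

/-- The subtree of `t` at a position `p` (a list of child indices), if it exists. -/
def sub : CTree α → List ℕ → Option (CTree α)
  | t, [] => some t
  | leaf _, _ :: _ => none
  | node ts, i :: p =>
      match ts[i]? with
      | some c => sub c p
      | none => none

/-- All lists of natural numbers of length at most `k` with entries `< m`. -/
def allLists (m : ℕ) : ℕ → List (List ℕ)
  | 0 => [[]]
  | k + 1 => [] :: (List.range m).flatMap (fun i => (allLists m k).map (i :: ·))

/-- The finite set of positions of vertices of `t`. -/
def vertS (t : CTree α) : Finset (List ℕ) :=
  (allLists (sizeOf t) (sizeOf t)).toFinset.filter (fun p => (t.sub p).isSome)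

/-- The finite set of positions of uncolored (internal) vertices of `t`. -/
def uncS (t : CTree α) : Finset (List ℕ) :=
  (allLists (sizeOf t) (sizeOf t)).toFinset.filter (fun p => ∃ ts, t.sub p = some (node ts))

/-- The finite set of positions of colored vertices (leaves) of `t`. -/
def colS (t : CTree α) : Finset (List ℕ) :=
  (allLists (sizeOf t) (sizeOf t)).toFinset.filter (fun p => ∃ a, t.sub p = some (leaf a))

/-- Edges of `t` are identified with the positions of non-root vertices (an edge joins
the vertex at `p ≠ []` to its parent at `p.dropLast`). -/
def edgeS (t : CTree α) : Finset (List ℕ) := (vertS t).erase []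

/-- `t` is a colored tree: every internal vertex has at least one child (so the leaves,
i.e. the childless vertices, are exactly the colored vertices) and the root is
uncolored. -/
def IsColoredTree (t : CTree α) : Prop :=
  (∀ p, t.sub p ≠ some (node ([] : List (CTree α)))) ∧ ∃ ts, t = node ts

/-- The weight `w_d ∈ M` of an edge `d`: the sum of the dual basis vectors `e_u^*`
over uncolored vertices `u` that are descendants of the upper endpoint of `d` but not
descendants of the lower endpoint of `d`. -/
def wt (t : CTree α) (d : List ℕ) : List ℕ → ℤ := fun u =>
  if u ∈ uncS t ∧ d.dropLast <+: u ∧ ¬ d <+: u then 1 else 0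

/-- `s_v ∈ M` : the sum of `e_u^*` over the uncolored descendants `u` of `v`;
`s(Γ) = sv t []`. -/
def sv (t : CTree α) (v : List ℕ) : List ℕ → ℤ := fun u =>
  if u ∈ uncS t ∧ v <+: u then 1 else 0

/-- The pairing between `M = Hom(ℤ^g, ℤ)` and `ℤ^g` (both realized as integer-valued
functions on the uncolored vertices of `t`). -/
def pairZ (t : CTree α) (μ x : List ℕ → ℤ) : ℤ := ∑ p ∈ uncS t, μ p * x p

/-- The pairing between `M` and `ℝ^g`. -/
def pairR (t : CTree α) (μ : List ℕ → ℤ) (x : List ℕ → ℝ) : ℝ :=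
  ∑ p ∈ uncS t, (μ p : ℝ) * x p

/-- The multiset of edges of the (downward) path from the vertex `v` to the vertex `c`;
each edge occurs with multiplicity one. -/
def pathEdges (t : CTree α) (v c : List ℕ) : Multiset (List ℕ) :=
  ((edgeS t).filter (fun d => v <+: d ∧ d ≠ v ∧ d <+: c)).val

/-- The relation `A ∼ B` on multisets of edges: `A` and `B` consist exactly of the edges
of two non-self-crossing paths from a common vertex to two colored vertices. -/
def Sim (t : CTree α) (A B : Multiset (List ℕ)) : Prop :=
  ∃ v ∈ vertS t, ∃ c₁ ∈ colS t, ∃ c₂ ∈ colS t, v <+: c₁ ∧ v <+: c₂ ∧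
    A = pathEdges t v c₁ ∧ B = pathEdges t v c₂

/-- `Y` is a minimally complete subset of the set of edges of `t`: every
(non-self-crossing) path from the root to a colored vertex contains exactly one edge
of `Y`. -/
def MinComplete (t : CTree α) (Y : Finset (List ℕ)) : Prop :=
  Y ⊆ edgeS t ∧ ∀ c ∈ colS t, ∃! d, d ∈ Y ∧ d <+: c

/-- The finite set of minimally complete subsets of the edge set of `t`. -/
def MCfin (t : CTree α) : Finset (Finset (List ℕ)) :=
  (edgeS t).powerset.filter (fun Y => MinComplete t Y)

/-- The dual cone `C(Γ) = {x ∈ ℝ^g | ⟨w_d, x⟩ ≥ 0 for all edges d}`. -/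
def dualCone (t : CTree α) : Set (List ℕ → ℝ) :=
  {x | (∀ p, p ∉ uncS t → x p = 0) ∧ ∀ d ∈ edgeS t, 0 ≤ pairR t (wt t d) x}

/-- The ray spanned by a vector `v`. -/
def ray (v : List ℕ → ℝ) : Set (List ℕ → ℝ) := {x | ∃ c : ℝ, 0 ≤ c ∧ x = c • v}

/-- `F` is a one-dimensional face (extreme ray) of the convex cone `C`. -/
def IsOneDimFace (C F : Set (List ℕ → ℝ)) : Prop :=
  F ⊆ C ∧ (∃ v, v ≠ 0 ∧ F = ray v) ∧
    ∀ x ∈ C, ∀ y ∈ C, x + y ∈ F → x ∈ F ∧ y ∈ F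

/-- The convex cone generated by a set `G ⊆ ℤ^g` inside `ℝ^g`: all finite nonnegative
real combinations of elements of `G`. -/
def coneHull (G : Set (List ℕ → ℤ)) : Set (List ℕ → ℝ) :=
  {x | ∃ (F : Finset (List ℕ → ℤ)) (c : (List ℕ → ℤ) → ℝ),
    ↑F ⊆ G ∧ (∀ v ∈ F, 0 ≤ c v) ∧
    x = ∑ v ∈ F, c v • (fun p => ((v p : ℤ) : ℝ))}

/-- `e_{v_0} ∈ ℤ^g`: the basis vector of the root vertex. -/
def e0 : List ℕ → ℤ := fun p => if p = [] then 1 else 0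

/-- The inclusion `ℤ^{g_i} → ℤ^g` corresponding to the `i`-th principal subtree. -/
def shift (i : ℕ) (f : List ℕ → ℤ) : List ℕ → ℤ := fun p =>
  match p with
  | [] => 0
  | j :: q => if j = i then f q else 0

def isNodeB : CTree α → Bool
  | leaf _ => false
  | node _ => true

/-- The recursively defined set `G(Γ) ⊆ ℤ^g`: `G(Γ)` consists of all vectors
`e_{v₀} + ∑_{i ∈ J} (w_i - e_{v₀})` where `J` ranges over subsets of the set of indices
of non-trivial principal subtrees and `w_i ∈ G(Γ_i)` (in particular if `g = 1` this is
just `{e_{v₀}}`). -/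
def Gset : CTree α → Set (List ℕ → ℤ)
  | leaf _ => ∅
  | node ts =>
      {v | ∃ (J : Finset (Fin ts.length)) (w : Fin ts.length → (List ℕ → ℤ)),
        (∀ i ∈ J, (ts.get i).isNodeB = true ∧ w i ∈ Gset (ts.get i)) ∧
        v = e0 + ∑ i ∈ J, (shift i.1 (w i) - e0)}
  termination_by t => sizeOf t
  decreasing_by
    have h1 : ts.get i ∈ ts := List.get_mem ts i
    have h2 := List.sizeOf_lt_of_mem h1
    simp only [CTree.node.sizeOf_spec]
    omega

/-- Transport of a set of edges of `Γ` to the `i`-th principal subtree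
(`Y ∩ E(Γ_i)`, rewritten in the coordinates of `Γ_i`). -/
def sect (i : ℕ) (Y : Finset (List ℕ)) : Finset (List ℕ) :=
  (Y.filter (fun p => p.head? = some i)).image List.tail

/-- The recursively defined vector `v_Y ∈ ℤ^g` attached to a (minimally complete) set
of edges `Y`: `v_Y = e_{v₀} + ∑_{i ∈ I} (v_{Y_i} - e_{v₀})` where
`I = {i | d_i ∉ Y}` and `Y_i = Y ∩ E(Γ_i)` (if `g = 1` this is just `e_{v₀}`). -/
def vY : CTree α → Finset (List ℕ) → (List ℕ → ℤ)
  | leaf _, _ => 0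
  | node ts, Y =>
      e0 + ∑ i ∈ Finset.univ.filter (fun i : Fin ts.length => [i.1] ∉ Y),
        (shift i.1 (vY (ts.get i) (sect i.1 Y)) - e0)
  termination_by t => sizeOf t
  decreasing_by
    have h1 : ts.get i ∈ ts := List.get_mem ts i
    have h2 := List.sizeOf_lt_of_mem h1
    simp only [CTree.node.sizeOf_spec]
    omega

/-- The set of balanced labellings `X(Γ) ⊆ ℂ^{E(Γ)}`. -/
def Xbal (t : CTree α) : Set (List ℕ → ℂ) :=
  {x | ∀ v ∈ uncS t, ∀ c ∈ colS t, ∀ c' ∈ colS t, v <+: c → v <+: c' →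
    ((pathEdges t v c).map x).prod = ((pathEdges t v c').map x).prod}

/-- `Y ⊆ E(Γ)` is complete: for every finite multiset `A` of edges, the monomial
`∏_{d ∈ A} x_d` vanishes identically on `{x ∈ X(Γ) | x_y = 0 ∀ y ∈ Y}` if and only if
`A` contains at least one edge belonging to `Y`. -/
def CompleteSet (t : CTree α) (Y : Finset (List ℕ)) : Prop :=
  ∀ A : Multiset (List ℕ), (∀ d ∈ A, d ∈ edgeS t) →
    ((∀ x ∈ Xbal t, (∀ y ∈ Y, x y = 0) → (A.map x).prod = 0) ↔ ∃ d ∈ A, d ∈ Y)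

/-- A partition of a type `I`: a finite collection of nonempty pairwise disjoint
subsets covering `I`. -/
def IsPart {I : Type} (P : Finset (Finset I)) : Prop :=
  (∀ S ∈ P, S ≠ ∅) ∧ ∀ a : I, ∃! S, S ∈ P ∧ a ∈ S

/-- The tree with a single uncolored vertex whose children are the colored vertices
labelled by the elements of `S`. -/
def blockTree {I : Type} (S : Finset I) : CTree I := node (S.toList.map leaf)

/-- The colored tree `Γ_P` of a partition `P`: the root has one child for each block
`S ∈ P`, an uncolored vertex whose children are colored vertices labelled by the
elements of `S`. -/
def gammaP {I : Type} (P : Finset (Finset I)) : CTree I := node (P.toList.map blockTree)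

/-- A tree homomorphism `t → t'`, described by a map `f` on vertex positions: it sends
root to root, vertices to vertices, the two endpoints of any edge to the two endpoints
of an edge, and restricts to a label-preserving bijection between the colored
vertices. -/
def TreeHom {I : Type} (t t' : CTree I) (f : List ℕ → List ℕ) : Prop :=
  f [] = [] ∧
  (∀ p ∈ vertS t, f p ∈ vertS t') ∧
  (∀ p ∈ vertS t, p ≠ [] →
    (f p ≠ [] ∧ (f p).dropLast = f p.dropLast) ∨
    (f p.dropLast ≠ [] ∧ (f p.dropLast).dropLast = f p)) ∧
  (∀ p a, t.sub p = some (leaf a) → t'.sub (f p) = some (leaf a)) ∧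
  Set.BijOn f {p | ∃ a, t.sub p = some (leaf a)} {q | ∃ a, t'.sub q = some (leaf a)}

/-- A partition `P` of the label set is compatible with the colored tree `t` if there
exists a tree homomorphism `t → Γ_P`. -/
def Compatible {I : Type} (t : CTree I) (P : Finset (Finset I)) : Prop :=
  ∃ f, TreeHom t (gammaP P) f

/-- `C_y ⊆ I` : the labels of the colored vertices whose path from the root contains
the edge `y`. -/
def Cy {I : Type} [Fintype I] [DecidableEq I] (t : CTree I) (y : List ℕ) : Finset I :=
  Finset.univ.filter (fun a => ∃ p, t.sub p = some (leaf a) ∧ y <+: p)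

end CTree


namespace CTree
variable {α : Type}

lemma mem_allLists {m k : ℕ} {p : List ℕ} :
    p ∈ allLists m k ↔ p.length ≤ k ∧ ∀ j ∈ p, j < m := by
  induction k generalizing p with
  | zero =>
    simp only [allLists, List.mem_singleton]
    constructor
    · rintro rfl; simp
    · rintro ⟨h1, _⟩; exact List.length_eq_zero_iff.1 (Nat.le_zero.1 h1)
  | succ k ih =>
    simp only [allLists, List.mem_cons, List.mem_flatMap, List.mem_map, List.mem_range]
    constructor
    · rintro (rfl | ⟨i, hi, q, hq, rfl⟩)
      · simp
      · obtain ⟨h1, h2⟩ := ih.1 hq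
        refine ⟨by simpa using h1, ?_⟩
        intro j hj; rcases List.mem_cons.1 hj with rfl | hj
        · exact hi
        · exact h2 _ hj
    · rintro ⟨h1, h2⟩
      cases p with
      | nil => left; rfl
      | cons i q =>
        right
        exact ⟨i, h2 i (by simp), q,
          ih.2 ⟨by simpa using h1, fun j hj => h2 j (by simp [hj])⟩, rfl⟩

lemma length_le_sizeOf (l : List (CTree α)) : l.length ≤ sizeOf l := by
  induction l with
  | nil => simp
  | cons a l ih => simp only [List.cons.sizeOf_spec, List.length_cons]; omega

lemma sub_cons_eq_some {ts : List (CTree α)} {i : ℕ} {p : List ℕ} {s : CTree α} :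
    (node ts).sub (i :: p) = some s ↔ ∃ c, ts[i]? = some c ∧ c.sub p = some s := by
  show (match ts[i]? with
    | some c => sub c p
    | none => none) = some s ↔ _
  cases h : ts[i]? <;> simp

lemma sub_bound {p : List ℕ} : ∀ {t s : CTree α}, t.sub p = some s →
    p.length + sizeOf s ≤ sizeOf t ∧ ∀ j ∈ p, j < sizeOf t := by
  induction p with
  | nil =>
    intro t s h
    simp only [sub, Option.some.injEq] at h
    subst h; simp
  | cons i q ih =>
    intro t s h
    cases t with
    | leaf a => simp [sub] at h
    | node ts =>
      obtain ⟨c, hc, hsub⟩ := sub_cons_eq_some.1 h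
      have hmem : c ∈ ts := List.mem_iff_getElem?.2 ⟨i, hc⟩
      have hlt : sizeOf c < sizeOf ts := List.sizeOf_lt_of_mem hmem
      have hi : i < ts.length := by
        by_contra hcon
        rw [List.getElem?_eq_none (by omega)] at hc
        cases hc
      have hts : ts.length ≤ sizeOf ts := length_le_sizeOf ts
      obtain ⟨h1, h2⟩ := ih hsub
      have hns : sizeOf (node ts) = 1 + sizeOf ts := by simp
      constructor
      · simp only [List.length_cons]; omega
      · intro j hj
        rcases List.mem_cons.1 hj with rfl | hj
        · omega
        · have := h2 j hj; omega

lemma mem_allLists_of_isSome {t : CTree α} {p : List ℕ} (h : (t.sub p).isSome) :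
    p ∈ allLists (sizeOf t) (sizeOf t) := by
  obtain ⟨s, hs⟩ := Option.isSome_iff_exists.1 h
  obtain ⟨h1, h2⟩ := sub_bound hs
  exact mem_allLists.2 ⟨by omega, h2⟩

lemma mem_vertS {t : CTree α} {p : List ℕ} : p ∈ vertS t ↔ (t.sub p).isSome := by
  unfold vertS
  rw [Finset.mem_filter]
  exact ⟨fun h => h.2, fun h => ⟨by simpa using mem_allLists_of_isSome h, h⟩⟩

lemma mem_uncS {t : CTree α} {p : List ℕ} :
    p ∈ uncS t ↔ ∃ ts, t.sub p = some (node ts) := by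
  unfold uncS
  rw [Finset.mem_filter]
  refine ⟨fun h => h.2, fun h => ⟨?_, h⟩⟩
  obtain ⟨ts, hts⟩ := h
  simpa using mem_allLists_of_isSome (by simp [hts])

lemma mem_colS {t : CTree α} {p : List ℕ} :
    p ∈ colS t ↔ ∃ a, t.sub p = some (leaf a) := by
  unfold colS
  rw [Finset.mem_filter]
  refine ⟨fun h => h.2, fun h => ⟨?_, h⟩⟩
  obtain ⟨a, ha⟩ := h
  simpa using mem_allLists_of_isSome (by simp [ha])

lemma mem_uncS_node {ts : List (CTree α)} {p : List ℕ} :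
    p ∈ uncS (node ts) ↔
      p = [] ∨ ∃ i : Fin ts.length, ∃ q, p = i.1 :: q ∧ q ∈ uncS (ts.get i) := by
  rw [mem_uncS]
  constructor
  · rintro ⟨us, hus⟩
    cases p with
    | nil => left; rfl
    | cons i q =>
      right
      obtain ⟨c, hc, hsub⟩ := sub_cons_eq_some.1 hus
      have hi : i < ts.length := by
        by_contra hcon
        rw [List.getElem?_eq_none (by omega)] at hc
        cases hc
      refine ⟨⟨i, hi⟩, q, rfl, mem_uncS.2 ⟨us, ?_⟩⟩
      rw [List.getElem?_eq_getElem hi, Option.some.injEq] at hc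
      show ts[i].sub q = _
      rw [hc]
      exact hsub
  · rintro (rfl | ⟨i, q, rfl, hq⟩)
    · exact ⟨ts, rfl⟩
    · obtain ⟨us, hus⟩ := mem_uncS.1 hq
      refine ⟨us, sub_cons_eq_some.2 ⟨ts.get i, ?_, hus⟩⟩
      exact List.getElem?_eq_getElem i.2

lemma uncS_node (ts : List (CTree α)) :
    uncS (node ts) = insert []
      ((Finset.univ : Finset (Fin ts.length)).biUnion
        fun i => (uncS (ts.get i)).image (i.1 :: ·)) := by
  ext p
  simp only [Finset.mem_insert, Finset.mem_biUnion, Finset.mem_univ, true_and,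
    Finset.mem_image, mem_uncS_node]
  constructor
  · rintro (rfl | ⟨i, q, rfl, hq⟩)
    · left; rfl
    · right; exact ⟨i, q, hq, rfl⟩
  · rintro (rfl | ⟨i, q, hq, rfl⟩)
    · left; rfl
    · right; exact ⟨i, q, rfl, hq⟩

lemma sum_uncS_node {M : Type*} [AddCommMonoid M] (ts : List (CTree α)) (f : List ℕ → M) :
    ∑ p ∈ uncS (node ts), f p
      = f [] + ∑ i : Fin ts.length, ∑ q ∈ uncS (ts.get i), f (i.1 :: q) := by
  rw [uncS_node, Finset.sum_insert, Finset.sum_biUnion]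
  · congr 1
    refine Finset.sum_congr rfl fun i _ => ?_
    rw [Finset.sum_image]
    intro a _ b _ h
    simpa using h
  · intro i _ j _ hij
    simp only [Finset.disjoint_left, Finset.mem_image]
    rintro p ⟨a, _, rfl⟩ ⟨b, _, hb⟩
    apply hij
    injection hb with h1 h2
    exact Fin.ext h1.symm
  · simp only [Finset.mem_biUnion, Finset.mem_univ, true_and, Finset.mem_image, not_exists]
    rintro i q ⟨-, h⟩
    cases h

end CTree


namespace CTree
variable {α : Type}

lemma Gset_leaf (a : α) : Gset (leaf a) = ∅ := by rw [Gset]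

lemma mem_Gset_node {ts : List (CTree α)} {v : List ℕ → ℤ} :
    v ∈ Gset (node ts) ↔
      ∃ (J : Finset (Fin ts.length)) (w : Fin ts.length → (List ℕ → ℤ)),
        (∀ i ∈ J, (ts.get i).isNodeB = true ∧ w i ∈ Gset (ts.get i)) ∧
        v = e0 + ∑ i ∈ J, (shift i.1 (w i) - e0) := by
  rw [Gset]; rfl

lemma repr_apply_nil {n : ℕ} (J : Finset (Fin n)) (w : Fin n → (List ℕ → ℤ)) :
    (e0 + ∑ i ∈ J, (shift i.1 (w i) - e0)) [] = 1 - (J.card : ℤ) := by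
  simp only [Pi.add_apply, Finset.sum_apply, Pi.sub_apply]
  rw [show (e0 [] : ℤ) = 1 from rfl]
  rw [Finset.sum_congr rfl (fun i _ => by
    show shift i.1 (w i) [] - e0 [] = -1
    rfl)]
  simp [sub_eq_add_neg]

lemma repr_apply_cons {n : ℕ} (J : Finset (Fin n)) (w : Fin n → (List ℕ → ℤ))
    (i : ℕ) (q : List ℕ) :
    (e0 + ∑ j ∈ J, (shift j.1 (w j) - e0)) (i :: q)
      = if h : i < n then (if ⟨i, h⟩ ∈ J then w ⟨i, h⟩ q else 0) else 0 := by
  simp only [Pi.add_apply, Finset.sum_apply, Pi.sub_apply]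
  have hterm : ∀ j ∈ J, shift j.1 (w j) (i :: q) - e0 (i :: q)
      = if h : i < n then (if j = ⟨i, h⟩ then w j q else 0) else 0 := by
    intro j _
    rw [show (e0 (i :: q) : ℤ) = 0 from rfl, sub_zero]
    show (if i = j.1 then w j q else 0) = _
    by_cases h : i < n
    · rw [dif_pos h]
      by_cases hji : j = ⟨i, h⟩
      · subst hji; simp
      · rw [if_neg, if_neg hji]
        intro hc
        exact hji (Fin.ext hc.symm)
    · rw [dif_neg h, if_neg]
      intro hc
      exact h (hc ▸ j.2)
  rw [Finset.sum_congr rfl hterm, show (e0 (i :: q) : ℤ) = 0 from rfl, zero_add]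
  by_cases h : i < n
  · simp only [dif_pos h]
    rw [Finset.sum_ite_eq' J (⟨i, h⟩ : Fin n) (fun j => w j q)]
  · simp only [dif_neg h]
    simp

lemma repr_apply_cons_fin {n : ℕ} (J : Finset (Fin n)) (w : Fin n → (List ℕ → ℤ))
    (i : Fin n) (q : List ℕ) :
    (e0 + ∑ j ∈ J, (shift j.1 (w j) - e0)) (i.1 :: q)
      = if i ∈ J then w i q else 0 := by
  rw [repr_apply_cons, dif_pos i.2]

lemma Gset_support : ∀ (t : CTree α) (v : List ℕ → ℤ), v ∈ Gset t →
    ∀ p, p ∉ uncS t → v p = 0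
  | leaf a, v, hv, p, hp => absurd hv (by simp [Gset_leaf])
  | node ts, v, hv, p, hp => by
    obtain ⟨J, w, hJ, rfl⟩ := mem_Gset_node.1 hv
    cases p with
    | nil => exact absurd ((mem_uncS (t := node ts) (p := [])).2 ⟨ts, rfl⟩) hp
    | cons i q =>
      rw [repr_apply_cons]
      by_cases h : i < ts.length
      · rw [dif_pos h]
        by_cases hJ' : (⟨i, h⟩ : Fin ts.length) ∈ J
        · rw [if_pos hJ']
          have h1 : sizeOf (ts.get ⟨i, h⟩) < sizeOf (node ts) := by
            have := List.sizeOf_lt_of_mem (List.get_mem ts ⟨i, h⟩)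
            simp only [CTree.node.sizeOf_spec]
            omega
          refine Gset_support (ts.get ⟨i, h⟩) _ (hJ _ hJ').2 q fun hq => ?_
          exact hp (mem_uncS_node.2 (Or.inr ⟨⟨i, h⟩, q, rfl, hq⟩))
        · rw [if_neg hJ']
      · rw [dif_neg h]
  termination_by t => sizeOf t
  decreasing_by exact h1

lemma Gset_sum : ∀ (t : CTree α) (v : List ℕ → ℤ), v ∈ Gset t →
    ∑ p ∈ uncS t, v p = 1
  | leaf a, v, hv => absurd hv (by simp [Gset_leaf])
  | node ts, v, hv => by
    obtain ⟨J, w, hJ, rfl⟩ := mem_Gset_node.1 hv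
    rw [sum_uncS_node, repr_apply_nil]
    have hinner : ∀ i : Fin ts.length,
        ∑ q ∈ uncS (ts.get i), (e0 + ∑ j ∈ J, (shift j.1 (w j) - e0)) (i.1 :: q)
          = if i ∈ J then 1 else 0 := by
      intro i
      rw [Finset.sum_congr rfl (fun q _ => repr_apply_cons_fin J w i q)]
      by_cases hi : i ∈ J
      · simp only [if_pos hi]
        have h1 : sizeOf (ts.get i) < sizeOf (node ts) := by
          have h2 := List.sizeOf_lt_of_mem (List.get_mem ts ⟨i.1, i.2⟩)
          simp only [Fin.eta] at h2
          simp only [CTree.node.sizeOf_spec]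
          omega
        exact Gset_sum (ts.get i) _ (hJ _ hi).2
      · simp [hi]
    rw [Finset.sum_congr rfl (fun i _ => hinner i)]
    rw [Finset.sum_ite_mem, Finset.univ_inter, Finset.sum_const]
    simp
  termination_by t => sizeOf t
  decreasing_by exact h1

end CTree


namespace CTree
variable {α : Type}

lemma mem_edgeS_node {ts : List (CTree α)} {d : List ℕ} :
    d ∈ edgeS (node ts) ↔
      ∃ i : Fin ts.length, ∃ e, d = i.1 :: e ∧ e ∈ vertS (ts.get i) := by
  unfold edgeS
  rw [Finset.mem_erase, mem_vertS]
  constructor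
  · rintro ⟨hne, hsome⟩
    cases d with
    | nil => exact absurd rfl hne
    | cons i e =>
      obtain ⟨s, hs⟩ := Option.isSome_iff_exists.1 hsome
      obtain ⟨c, hc, hsub⟩ := sub_cons_eq_some.1 hs
      have hi : i < ts.length := by
        by_contra hcon
        rw [List.getElem?_eq_none (by omega)] at hc
        cases hc
      rw [List.getElem?_eq_getElem hi, Option.some.injEq] at hc
      refine ⟨⟨i, hi⟩, e, rfl, mem_vertS.2 ?_⟩
      show (ts[i].sub e).isSome
      rw [hc, hsub]; rfl
  · rintro ⟨i, e, rfl, he⟩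
    refine ⟨by simp, ?_⟩
    obtain ⟨s, hs⟩ := Option.isSome_iff_exists.1 (mem_vertS.1 he)
    rw [Option.isSome_iff_exists]
    exact ⟨s, sub_cons_eq_some.2 ⟨ts.get i, List.getElem?_eq_getElem i.2, hs⟩⟩

lemma nil_mem_vertS (t : CTree α) : [] ∈ vertS t := mem_vertS.2 (by cases t <;> rfl)

lemma mem_vertS_iff_edge {t : CTree α} {e : List ℕ} :
    e ∈ vertS t ↔ e = [] ∨ e ∈ edgeS t := by
  unfold edgeS
  rw [Finset.mem_erase]
  by_cases h : e = []
  · subst h; simp [nil_mem_vertS]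
  · simp [h]

lemma ne_nil_of_mem_edgeS {t : CTree α} {e : List ℕ} (he : e ∈ edgeS t) : e ≠ [] :=
  (Finset.mem_erase.1 he).1

lemma pairR_wt_principal (ts : List (CTree α)) (i : Fin ts.length) (x : List ℕ → ℝ) :
    pairR (node ts) (wt (node ts) [i.1]) x
      = (∑ p ∈ uncS (node ts), x p) - ∑ q ∈ uncS (ts.get i), x (i.1 :: q) := by
  unfold pairR
  have hwt : ∀ p ∈ uncS (node ts),
      ((wt (node ts) [i.1] p : ℤ) : ℝ) * x p = x p - (if [i.1] <+: p then x p else 0) := by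
    intro p hp
    unfold wt
    by_cases hpre : [i.1] <+: p
    · rw [if_neg (by tauto), if_pos hpre]
      simp
    · rw [if_pos ⟨hp, by simp, hpre⟩, if_neg hpre]
      simp
  rw [Finset.sum_congr rfl hwt, Finset.sum_sub_distrib]
  congr 1
  rw [sum_uncS_node ts (fun p => if [i.1] <+: p then x p else 0)]
  rw [if_neg (by simp)]
  rw [zero_add]
  have hterm : ∀ j : Fin ts.length,
      (∑ q ∈ uncS (ts.get j), if [i.1] <+: (j.1 :: q) then x (j.1 :: q) else 0)
        = if j = i then ∑ q ∈ uncS (ts.get j), x (j.1 :: q) else 0 := by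
    intro j
    by_cases hij : j = i
    · subst hij
      rw [if_pos rfl]
      refine Finset.sum_congr rfl fun q _ => ?_
      rw [if_pos]
      exact ⟨q, rfl⟩
    · rw [if_neg hij]
      refine Finset.sum_eq_zero fun q _ => ?_
      rw [if_neg]
      rintro ⟨r, hr⟩
      injection hr with h1 h2
      exact hij (Fin.ext h1.symm)
  rw [Finset.sum_congr rfl (fun j _ => hterm j), Finset.sum_ite_eq' Finset.univ i]
  simp

lemma pairR_wt_inner (ts : List (CTree α)) (i : Fin ts.length) (e : List ℕ)
    (he : e ≠ []) (x : List ℕ → ℝ) :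
    pairR (node ts) (wt (node ts) (i.1 :: e)) x
      = pairR (ts.get i) (wt (ts.get i) e) (fun q => x (i.1 :: q)) := by
  unfold pairR
  rw [sum_uncS_node ts (fun p => ((wt (node ts) (i.1 :: e) p : ℤ) : ℝ) * x p)]
  have hdl : (i.1 :: e).dropLast = i.1 :: e.dropLast := by
    cases e with
    | nil => exact absurd rfl he
    | cons a l => rfl
  have h0 : ((wt (node ts) (i.1 :: e) [] : ℤ) : ℝ) * x [] = 0 := by
    unfold wt
    rw [if_neg, Int.cast_zero, zero_mul]
    rintro ⟨-, hpre, -⟩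
    rw [hdl] at hpre
    exact absurd (List.prefix_nil.1 hpre) (by simp)
  rw [h0, zero_add]
  have hterm : ∀ j : Fin ts.length,
      (∑ q ∈ uncS (ts.get j), ((wt (node ts) (i.1 :: e) (j.1 :: q) : ℤ) : ℝ) * x (j.1 :: q))
        = if j = i then ∑ q ∈ uncS (ts.get i), ((wt (ts.get i) e q : ℤ) : ℝ) * x (i.1 :: q)
          else 0 := by
    intro j
    by_cases hij : j = i
    · subst hij
      rw [if_pos rfl]
      refine Finset.sum_congr rfl fun q hq => ?_
      unfold wt
      rw [hdl]
      have huncn : (j.1 :: q) ∈ uncS (node ts) :=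
        mem_uncS_node.2 (Or.inr ⟨j, q, rfl, hq⟩)
      by_cases hcnd : q ∈ uncS (ts.get j) ∧ e.dropLast <+: q ∧ ¬ e <+: q
      · rw [if_pos hcnd, if_pos (⟨huncn, List.cons_prefix_cons.2 ⟨rfl, hcnd.2.1⟩,
          fun hc => hcnd.2.2 (List.cons_prefix_cons.1 hc).2⟩ :
            (j.1 :: q) ∈ uncS (node ts) ∧ (j.1 :: e.dropLast) <+: (j.1 :: q) ∧
              ¬ (j.1 :: e) <+: (j.1 :: q))]
      · rw [if_neg hcnd, if_neg (fun h => hcnd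
          ⟨hq, (List.cons_prefix_cons.1 h.2.1).2,
            fun hc => h.2.2 (List.cons_prefix_cons.2 ⟨rfl, hc⟩)⟩ :
          ¬((j.1 :: q) ∈ uncS (node ts) ∧ (j.1 :: e.dropLast) <+: (j.1 :: q) ∧
              ¬ (j.1 :: e) <+: (j.1 :: q)))]
    · rw [if_neg hij]
      refine Finset.sum_eq_zero fun q _ => ?_
      unfold wt
      rw [if_neg, Int.cast_zero, zero_mul]
      rintro ⟨-, hc, -⟩
      rw [hdl] at hc
      exact hij (Fin.ext (List.cons_prefix_cons.1 hc).1.symm)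
  rw [Finset.sum_congr rfl (fun j _ => hterm j), Finset.sum_ite_eq' Finset.univ i]
  simp

lemma pairR_add (t : CTree α) (μ : List ℕ → ℤ) (x y : List ℕ → ℝ) :
    pairR t μ (x + y) = pairR t μ x + pairR t μ y := by
  unfold pairR
  rw [← Finset.sum_add_distrib]
  exact Finset.sum_congr rfl fun p _ => by simp [mul_add]

lemma pairR_smul (t : CTree α) (μ : List ℕ → ℤ) (c : ℝ) (x : List ℕ → ℝ) :
    pairR t μ (c • x) = c * pairR t μ x := by
  unfold pairR
  rw [Finset.mul_sum]
  exact Finset.sum_congr rfl fun p _ => by simp; ring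

lemma zero_mem_dualCone (t : CTree α) : (0 : List ℕ → ℝ) ∈ dualCone t := by
  refine ⟨fun p _ => rfl, fun d _ => ?_⟩
  have : pairR t (wt t d) 0 = 0 := by
    unfold pairR; simp
  rw [this]

lemma add_mem_dualCone {t : CTree α} {x y : List ℕ → ℝ}
    (hx : x ∈ dualCone t) (hy : y ∈ dualCone t) : x + y ∈ dualCone t := by
  refine ⟨fun p hp => by simp [hx.1 p hp, hy.1 p hp], fun d hd => ?_⟩
  rw [pairR_add]
  exact add_nonneg (hx.2 d hd) (hy.2 d hd)

lemma smul_mem_dualCone {t : CTree α} {c : ℝ} (hc : 0 ≤ c) {x : List ℕ → ℝ}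
    (hx : x ∈ dualCone t) : c • x ∈ dualCone t := by
  refine ⟨fun p hp => by simp [hx.1 p hp], fun d hd => ?_⟩
  rw [pairR_smul]
  exact mul_nonneg hc (hx.2 d hd)

lemma zero_mem_coneHull (G : Set (List ℕ → ℤ)) : (0 : List ℕ → ℝ) ∈ coneHull G :=
  ⟨∅, fun _ => 0, by simp, by simp, by simp⟩

lemma smul_gen_mem_coneHull {G : Set (List ℕ → ℤ)} {v : List ℕ → ℤ} (hv : v ∈ G)
    {c : ℝ} (hc : 0 ≤ c) : (c • fun p => ((v p : ℤ) : ℝ)) ∈ coneHull G := by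
  refine ⟨{v}, fun _ => c, by simpa using hv, fun _ _ => hc, by simp⟩

lemma add_mem_coneHull {G : Set (List ℕ → ℤ)} {x y : List ℕ → ℝ}
    (hx : x ∈ coneHull G) (hy : y ∈ coneHull G) : x + y ∈ coneHull G := by
  obtain ⟨F1, c1, hF1, hc1, rfl⟩ := hx
  obtain ⟨F2, c2, hF2, hc2, rfl⟩ := hy
  refine ⟨F1 ∪ F2, fun v => (if v ∈ F1 then c1 v else 0) + (if v ∈ F2 then c2 v else 0),
    ?_, ?_, ?_⟩
  · rw [Finset.coe_union]
    exact Set.union_subset hF1 hF2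
  · intro v _
    apply add_nonneg
    · split
      · exact hc1 v ‹_›
      · exact le_refl 0
    · split
      · exact hc2 v ‹_›
      · exact le_refl 0
  · have split1 : ∀ (c : (List ℕ → ℤ) → ℝ) (F : Finset (List ℕ → ℤ)) (v : List ℕ → ℤ),
        ((if v ∈ F then c v else 0) • (fun p => ((v p : ℤ) : ℝ)) : List ℕ → ℝ)
          = if v ∈ F then c v • (fun p => ((v p : ℤ) : ℝ)) else 0 := by
      intro c F v; split <;> simp
    rw [Finset.sum_congr rfl (fun v _ => add_smul _ _ _), Finset.sum_add_distrib]
    congr 1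
    · rw [Finset.sum_congr rfl (fun v _ => split1 c1 F1 v), Finset.sum_ite_mem,
        Finset.union_inter_cancel_left]
    · rw [Finset.sum_congr rfl (fun v _ => split1 c2 F2 v), Finset.sum_ite_mem,
        Finset.union_inter_cancel_right]

lemma sum_mem_coneHull {G : Set (List ℕ → ℤ)} {ι : Type*} (s : Finset ι)
    (f : ι → (List ℕ → ℝ)) (hf : ∀ j ∈ s, f j ∈ coneHull G) :
    (∑ j ∈ s, f j) ∈ coneHull G := by
  classical
  induction s using Finset.induction_on with
  | empty => simpa using zero_mem_coneHull G
  | insert _ _ hni ih =>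
    rw [Finset.sum_insert hni]
    exact add_mem_coneHull (hf _ (Finset.mem_insert_self _ _))
      (ih fun j hj => hf j (Finset.mem_insert_of_mem hj))

end CTree


namespace CTree
variable {α : Type}

lemma repr_branch_sum {ts : List (CTree α)} {J : Finset (Fin ts.length)}
    {w : Fin ts.length → (List ℕ → ℤ)}
    (hJ : ∀ i ∈ J, (ts.get i).isNodeB = true ∧ w i ∈ Gset (ts.get i))
    (i : Fin ts.length) :
    ∑ q ∈ uncS (ts.get i), (e0 + ∑ j ∈ J, (shift j.1 (w j) - e0)) (i.1 :: q)
      = if i ∈ J then 1 else 0 := by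
  rw [Finset.sum_congr rfl (fun q _ => repr_apply_cons_fin J w i q)]
  by_cases hi : i ∈ J
  · simp only [if_pos hi]
    exact Gset_sum (ts.get i) _ (hJ _ hi).2
  · simp [hi]

lemma pairR_zero_right (t : CTree α) (μ : List ℕ → ℤ) :
    pairR t μ 0 = 0 := by unfold pairR; simp

lemma sum_mem_dualCone {t : CTree α} {ι : Type*} (s : Finset ι)
    (f : ι → (List ℕ → ℝ)) (hf : ∀ j ∈ s, f j ∈ dualCone t) :
    (∑ j ∈ s, f j) ∈ dualCone t := by
  induction s using Finset.induction_on with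
  | empty => simpa using zero_mem_dualCone t
  | insert _ _ hni ih =>
    rw [Finset.sum_insert hni]
    exact add_mem_dualCone (hf _ (Finset.mem_insert_self _ _))
      (ih fun j hj => hf j (Finset.mem_insert_of_mem hj))

lemma Gset_subset_dualCone : ∀ (t : CTree α) (v : List ℕ → ℤ), v ∈ Gset t →
    (fun p => ((v p : ℤ) : ℝ)) ∈ dualCone t
  | leaf a, v, hv => absurd hv (by simp [Gset_leaf])
  | node ts, v, hv => by
    obtain ⟨J, w, hJ, rfl⟩ := mem_Gset_node.1 hv
    set v : List ℕ → ℤ := e0 + ∑ j ∈ J, (shift j.1 (w j) - e0) with hvdef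
    constructor
    · intro p hp
      show ((v p : ℤ) : ℝ) = 0
      rw [Gset_support (node ts) v hv p hp, Int.cast_zero]
    · intro d hd
      obtain ⟨i, e, rfl, he⟩ := mem_edgeS_node.1 hd
      rcases mem_vertS_iff_edge.1 he with rfl | hee
      · rw [pairR_wt_principal]
        have hsum : ∑ p ∈ uncS (node ts), ((v p : ℤ) : ℝ) = 1 := by
          rw [← Int.cast_sum, Gset_sum (node ts) v hv, Int.cast_one]
        have hbr : ∑ q ∈ uncS (ts.get i), ((v (i.1 :: q) : ℤ) : ℝ)
            = if i ∈ J then 1 else 0 := by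
          rw [← Int.cast_sum, hvdef, repr_branch_sum hJ i]
          split <;> simp
        rw [hsum, hbr]
        split <;> norm_num
      · rw [pairR_wt_inner ts i e (ne_nil_of_mem_edgeS hee)]
        have hfun : (fun q => ((v (i.1 :: q) : ℤ) : ℝ))
            = fun q => ((if i ∈ J then w i q else 0 : ℤ) : ℝ) := by
          funext q
          rw [hvdef, repr_apply_cons_fin]
        rw [hfun]
        by_cases hi : i ∈ J
        · simp only [if_pos hi]
          have h1 : sizeOf (ts.get i) < sizeOf (node ts) := by
            have h2 := List.sizeOf_lt_of_mem (List.get_mem ts ⟨i.1, i.2⟩)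
            simp only [Fin.eta] at h2
            simp only [CTree.node.sizeOf_spec]
            omega
          exact (Gset_subset_dualCone (ts.get i) (w i) (hJ _ hi).2).2 e hee
        · simp only [if_neg hi]
          rw [show (fun _ : List ℕ => ((0 : ℤ) : ℝ)) = (0 : List ℕ → ℝ) by funext; simp,
            pairR_zero_right]
  termination_by t => sizeOf t
  decreasing_by exact h1

lemma coneHull_Gset_subset_dualCone (t : CTree α) :
    coneHull (Gset t) ⊆ dualCone t := by
  rintro x ⟨F, c, hF, hc, rfl⟩
  apply sum_mem_dualCone
  intro v hvF
  exact smul_mem_dualCone (hc v hvF) (Gset_subset_dualCone t v (hF hvF))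
end CTree


namespace CTree
variable {α : Type}

lemma sub_cons_get (ts : List (CTree α)) (i : Fin ts.length) (p : List ℕ) :
    (node ts).sub (i.1 :: p) = (ts.get i).sub p := by
  show (match ts[i.1]? with
    | some c => sub c p
    | none => none) = _
  rw [List.getElem?_eq_getElem i.2]
  rfl

lemma uncS_leaf (a : α) : uncS (leaf a) = ∅ := by
  ext p
  simp only [Finset.notMem_empty, iff_false, mem_uncS]
  rintro ⟨us, hus⟩
  cases p with
  | nil => simp [sub] at hus
  | cons i q => simp [sub] at hus

lemma length_pos_of_colored {ts : List (CTree α)} (ht : IsColoredTree (node ts)) :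
    0 < ts.length := by
  rcases ts with - | ⟨a, l⟩
  · exact absurd rfl (ht.1 [])
  · simp

lemma child_colored {ts : List (CTree α)} (ht : IsColoredTree (node ts))
    (i : Fin ts.length) (h : (ts.get i).isNodeB = true) : IsColoredTree (ts.get i) := by
  constructor
  · intro p hp
    exact ht.1 (i.1 :: p) (by rw [sub_cons_get]; exact hp)
  · cases hts : ts.get i with
    | leaf a => rw [hts] at h; exact Bool.noConfusion h
    | node us => exact ⟨us, rfl⟩

lemma isNodeB_of_mem_Gset {t : CTree α} {v : List ℕ → ℤ} (h : v ∈ Gset t) :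
    t.isNodeB = true := by
  cases t with
  | leaf a => exact absurd h (by simp [Gset_leaf])
  | node ts => rfl

lemma cons_mem_uncS_node {ts : List (CTree α)} {i : Fin ts.length} {q : List ℕ} :
    (i.1 :: q) ∈ uncS (node ts) ↔ q ∈ uncS (ts.get i) := by
  rw [mem_uncS_node]
  constructor
  · rintro (h | ⟨j, r, hjr, hr⟩)
    · cases h
    · injection hjr with h1 h2
      subst h2
      rwa [show j = i from Fin.ext h1.symm] at hr
  · intro h
    exact Or.inr ⟨i, q, rfl, h⟩

lemma res_mem_dualCone {ts : List (CTree α)} {x : List ℕ → ℝ}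
    (hx : x ∈ dualCone (node ts)) (i : Fin ts.length) :
    (fun q => x (i.1 :: q)) ∈ dualCone (ts.get i) := by
  constructor
  · intro q hq
    exact hx.1 (i.1 :: q) (fun hc => hq (cons_mem_uncS_node.1 hc))
  · intro e he
    have := hx.2 (i.1 :: e)
      (mem_edgeS_node.2 ⟨i, e, rfl, mem_vertS_iff_edge.2 (Or.inr he)⟩)
    rwa [pairR_wt_inner ts i e (ne_nil_of_mem_edgeS he)] at this

end CTree


namespace CTree
variable {α : Type}

lemma dualCone_subset_coneHull : ∀ (t : CTree α), IsColoredTree t →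
    ∀ x ∈ dualCone t, x ∈ coneHull (Gset t)
  | leaf a, ht, x, hx => by
    obtain ⟨ts, h⟩ := ht.2
    cases h
  | node ts, ht, x, hx => by
    have hsz : ∀ i : Fin ts.length, sizeOf (ts.get i) < sizeOf (node ts) := by
      intro i
      have h2 := List.sizeOf_lt_of_mem (List.get_mem ts ⟨i.1, i.2⟩)
      simp only [Fin.eta] at h2
      simp only [CTree.node.sizeOf_spec]
      omega
    have hdec : ∀ i : Fin ts.length, ∃ (F : Finset (List ℕ → ℤ)) (c : (List ℕ → ℤ) → ℝ),
        ↑F ⊆ Gset (ts.get i) ∧ (∀ v ∈ F, 0 ≤ c v) ∧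
        (fun q => x (i.1 :: q)) = ∑ v ∈ F, c v • (fun p => ((v p : ℤ) : ℝ)) := by
      intro i
      cases hb : (ts.get i).isNodeB with
      | true =>
        exact dualCone_subset_coneHull (ts.get i) (child_colored ht i hb)
          _ (res_mem_dualCone hx i)
      | false =>
        refine ⟨∅, fun _ => 0, by simp, by simp, ?_⟩
        funext q
        rw [Finset.sum_empty]
        show x (i.1 :: q) = 0
        apply hx.1
        rw [cons_mem_uncS_node]
        cases hts : ts.get i with
        | leaf a => simp [uncS_leaf]
        | node us => rw [hts] at hb; exact Bool.noConfusion hb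
    choose F c hF hc hrepr using hdec
    set si : Fin ts.length → ℝ := fun i => ∑ q ∈ uncS (ts.get i), x (i.1 :: q) with hsidef
    set T : ℝ := ∑ p ∈ uncS (node ts), x p with hTdef
    have hT : T = x [] + ∑ i : Fin ts.length, si i := sum_uncS_node ts x
    have hsiT : ∀ i, si i ≤ T := by
      intro i
      have h := hx.2 [i.1] (mem_edgeS_node.2 ⟨i, [], rfl, nil_mem_vertS _⟩)
      rw [pairR_wt_principal] at h
      linarith
    have hxptw : ∀ (i : Fin ts.length) (q : List ℕ),
        x (i.1 :: q) = ∑ v ∈ F i, c i v * ((v q : ℤ) : ℝ) := by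
      intro i q
      have h := congrFun (hrepr i) q
      simp only [Finset.sum_apply, Pi.smul_apply, smul_eq_mul] at h
      exact h
    have hsieq : ∀ i, si i = ∑ v ∈ F i, c i v := by
      intro i
      rw [show si i = ∑ q ∈ uncS (ts.get i), x (i.1 :: q) from rfl,
        Finset.sum_congr rfl (fun q _ => hxptw i q), Finset.sum_comm]
      refine Finset.sum_congr rfl fun v hv => ?_
      rw [← Finset.mul_sum, ← Int.cast_sum, Gset_sum (ts.get i) v (hF i hv),
        Int.cast_one, mul_one]
    have hsinn : ∀ i, 0 ≤ si i := fun i => by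
      rw [hsieq i]; exact Finset.sum_nonneg (hc i)
    have hTnn : 0 ≤ T := by
      have i0 : Fin ts.length := ⟨0, length_pos_of_colored ht⟩
      linarith [hsiT i0, hsinn i0]
    rcases eq_or_lt_of_le hTnn with hT0 | hTpos
    · -- T = 0, x = 0
      have hsi0 : ∀ i, si i = 0 := fun i => le_antisymm (hT0 ▸ hsiT i) (hsinn i)
      have hc0 : ∀ i, ∀ v ∈ F i, c i v = 0 := by
        intro i
        exact fun v hv => (Finset.sum_eq_zero_iff_of_nonneg (hc i)).1
          ((hsieq i).symm.trans (hsi0 i)) v hv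
      have hx0 : x = 0 := by
        funext p
        show x p = 0
        by_cases hpu : p ∈ uncS (node ts)
        · rcases mem_uncS_node.1 hpu with rfl | ⟨i, q, rfl, hq⟩
          · have hs : ∑ i : Fin ts.length, si i = 0 :=
              Finset.sum_eq_zero fun i _ => hsi0 i
            rw [hs] at hT
            linarith
          · rw [hxptw i q]
            exact Finset.sum_eq_zero fun v hv => by rw [hc0 i v hv, zero_mul]
        · exact hx.1 p hpu
      rw [hx0]
      exact zero_mem_coneHull _
    · -- T > 0
      set Ffam : Fin ts.length → Finset (Option (List ℕ → ℤ)) :=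
        fun i => insert none ((F i).image some) with hFfamdef
      set γ : Fin ts.length → Option (List ℕ → ℤ) → ℝ :=
        fun i o => o.elim (T - si i) (c i) with hγdef
      set lam : (Fin ts.length → Option (List ℕ → ℤ)) → ℝ :=
        fun g => T * ∏ i, (γ i (g i) / T) with hlamdef
      set vg : (Fin ts.length → Option (List ℕ → ℤ)) → (List ℕ → ℤ) :=
        fun g => e0 + ∑ i ∈ Finset.univ.filter (fun i => g i ≠ none),
          (shift i.1 ((g i).getD 0) - e0) with hvgdef
      have hγnn : ∀ i o, o ∈ Ffam i → 0 ≤ γ i o := by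
        intro i o ho
        rcases Finset.mem_insert.1 ho with rfl | ho
        · show 0 ≤ T - si i
          linarith [hsiT i]
        · obtain ⟨v, hv, rfl⟩ := Finset.mem_image.1 ho
          exact hc i v hv
      have hγsum : ∀ i, ∑ o ∈ Ffam i, γ i o = T := by
        intro i
        rw [show Ffam i = insert none ((F i).image some) from rfl,
          Finset.sum_insert (by simp),
          Finset.sum_image (fun a _ b _ hab => Option.some.inj hab)]
        show (T - si i) + ∑ v ∈ F i, c i v = T
        rw [← hsieq i]; ring
      have hγsum1 : ∀ i, ∑ o ∈ Ffam i, γ i o / T = 1 := by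
        intro i
        rw [← Finset.sum_div, hγsum i, div_self (ne_of_gt hTpos)]
      have hlamnn : ∀ g ∈ Fintype.piFinset Ffam, 0 ≤ lam g := by
        intro g hg
        refine mul_nonneg (le_of_lt hTpos) (Finset.prod_nonneg fun i _ => ?_)
        exact div_nonneg (hγnn i (g i) (Fintype.mem_piFinset.1 hg i)) (le_of_lt hTpos)
      have hvgG : ∀ g ∈ Fintype.piFinset Ffam, vg g ∈ Gset (node ts) := by
        intro g hg
        refine mem_Gset_node.2 ⟨Finset.univ.filter (fun i => g i ≠ none),
          fun i => (g i).getD 0, ?_, rfl⟩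
        intro i hi
        have hgi := Fintype.mem_piFinset.1 hg i
        rcases Finset.mem_insert.1 hgi with h | h
        · exact absurd h (Finset.mem_filter.1 hi).2
        · obtain ⟨v, hv, hgv⟩ := Finset.mem_image.1 h
          have hvG := hF i hv
          refine ⟨isNodeB_of_mem_Gset hvG, ?_⟩
          show (g i).getD 0 ∈ _
          rw [← hgv]
          simpa using hvG
      have hmaster : ∑ g ∈ Fintype.piFinset Ffam, lam g = T := by
        rw [show (fun g => T * ∏ i, (γ i (g i) / T)) = lam from rfl] at *
        calc ∑ g ∈ Fintype.piFinset Ffam, lam g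
            = T * ∑ g ∈ Fintype.piFinset Ffam, ∏ i, (γ i (g i) / T) := by
              rw [Finset.mul_sum]
          _ = T * ∏ i, ∑ o ∈ Ffam i, γ i o / T := by
              rw [Finset.prod_univ_sum]
          _ = T := by
              rw [Finset.prod_congr rfl (fun i _ => hγsum1 i), Finset.prod_const_one,
                mul_one]
      have hfilter : ∀ (i : Fin ts.length) (o), o ∈ Ffam i →
          (Fintype.piFinset Ffam).filter (fun g => g i = o)
            = Fintype.piFinset (Function.update Ffam i {o}) := by
        intro i o ho
        ext g
        simp only [Finset.mem_filter, Fintype.mem_piFinset]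
        constructor
        · rintro ⟨hg, hgi⟩ j
          by_cases hj : j = i
          · subst hj
            rw [Function.update_self, Finset.mem_singleton]
            exact hgi
          · rw [Function.update_of_ne hj]
            exact hg j
        · intro hg
          have hgi : g i = o := by
            have h := hg i
            rwa [Function.update_self, Finset.mem_singleton] at h
          refine ⟨fun j => ?_, hgi⟩
          by_cases hj : j = i
          · subst hj
            rw [hgi]
            exact ho
          · have h := hg j
            rwa [Function.update_of_ne hj] at h
      have hfiber : ∀ (i : Fin ts.length) (o), o ∈ Ffam i →
          ∑ g ∈ (Fintype.piFinset Ffam).filter (fun g => g i = o), lam g = γ i o := by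
        intro i o ho
        rw [hfilter i o ho]
        calc ∑ g ∈ Fintype.piFinset (Function.update Ffam i {o}), lam g
            = T * ∏ j, ∑ o' ∈ Function.update Ffam i {o} j, γ j o' / T := by
              rw [Finset.prod_univ_sum, Finset.mul_sum]
          _ = T * (γ i o / T) := by
              congr 1
              rw [Finset.prod_eq_single_of_mem i (Finset.mem_univ i)
                (fun j _ hj => by rw [Function.update_of_ne hj]; exact hγsum1 j)]
              rw [Function.update_self, Finset.sum_singleton]
          _ = γ i o := by
              field_simp
      have hxeq : x = ∑ g ∈ Fintype.piFinset Ffam,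
          lam g • (fun p => ((vg g p : ℤ) : ℝ)) := by
        funext p
        rw [Finset.sum_apply]
        rw [Finset.sum_congr rfl (fun g _ =>
          (by rfl : (lam g • (fun p => ((vg g p : ℤ) : ℝ))) p = lam g * ((vg g p : ℤ) : ℝ)))]
        show x p = _
        cases p with
        | nil =>
          have hval : ∀ g, ((vg g ([] : List ℕ) : ℤ) : ℝ)
              = 1 - (((Finset.univ.filter (fun i => g i ≠ none)).card : ℕ) : ℝ) := by
            intro g
            rw [show vg g ([] : List ℕ)
              = (e0 + ∑ i ∈ Finset.univ.filter (fun i => g i ≠ none),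
                  (shift i.1 ((g i).getD 0) - e0)) ([] : List ℕ) from rfl]
            rw [repr_apply_nil]
            push_cast
            ring
          have hcard : ∀ g : Fin ts.length → Option (List ℕ → ℤ),
              (((Finset.univ.filter (fun i => g i ≠ none)).card : ℕ) : ℝ)
                = ∑ i : Fin ts.length, (g i).elim 0 (fun _ => (1:ℝ)) := by
            intro g
            rw [Finset.card_filter, Nat.cast_sum]
            refine Finset.sum_congr rfl fun i _ => ?_
            cases g i <;> simp
          have hindsum : ∀ i : Fin ts.length,
              ∑ g ∈ Fintype.piFinset Ffam, lam g * (g i).elim 0 (fun _ => (1:ℝ))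
                = si i := by
            intro i
            rw [← Finset.sum_fiberwise_of_maps_to
              (fun g hg => Fintype.mem_piFinset.1 hg i)
              (fun g => lam g * (g i).elim 0 (fun _ => (1:ℝ)))]
            have hin : ∀ o ∈ Ffam i,
                ∑ g ∈ (Fintype.piFinset Ffam).filter (fun g => g i = o),
                  lam g * (g i).elim 0 (fun _ => (1:ℝ))
                  = γ i o * o.elim 0 (fun _ => (1:ℝ)) := by
              intro o ho
              rw [Finset.sum_congr rfl
                (fun g hg => by rw [(Finset.mem_filter.1 hg).2]),
                ← Finset.sum_mul, hfiber i o ho]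
            rw [Finset.sum_congr rfl hin,
              show Ffam i = insert none ((F i).image some) from rfl,
              Finset.sum_insert (by simp),
              Finset.sum_image (fun a _ b _ hab => Option.some.inj hab)]
            show γ i none * 0 + ∑ v ∈ F i, γ i (some v) * 1 = si i
            rw [mul_zero, zero_add, hsieq i]
            exact Finset.sum_congr rfl fun v _ => mul_one _
          rw [Finset.sum_congr rfl (fun g _ => by
              rw [hval g, hcard g, mul_sub, mul_one, Finset.mul_sum]),
            Finset.sum_sub_distrib, hmaster, Finset.sum_comm,
            Finset.sum_congr rfl (fun i _ => hindsum i)]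
          linarith
        | cons i q =>
          by_cases h : i < ts.length
          · have hvalZ : ∀ g : Fin ts.length → Option (List ℕ → ℤ),
                vg g (i :: q) = (g ⟨i, h⟩).elim 0 (fun v => v q) := by
              intro g
              rw [show vg g (i :: q)
                = (e0 + ∑ j ∈ Finset.univ.filter (fun j => g j ≠ none),
                    (shift j.1 ((g j).getD 0) - e0)) (i :: q) from rfl]
              rw [repr_apply_cons, dif_pos h]
              by_cases hgi : g ⟨i, h⟩ = none
              · rw [if_neg (show (⟨i, h⟩ : Fin ts.length) ∉
                    Finset.univ.filter (fun j => g j ≠ none) from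
                    fun hmem => (Finset.mem_filter.1 hmem).2 hgi), hgi]
                rfl
              · obtain ⟨v, hv⟩ := Option.ne_none_iff_exists'.1 hgi
                rw [if_pos (show (⟨i, h⟩ : Fin ts.length) ∈
                    Finset.univ.filter (fun j => g j ≠ none) from
                    Finset.mem_filter.2 ⟨Finset.mem_univ _, hgi⟩)]
                show (g ⟨i, h⟩).getD 0 q = _
                rw [hv]
                rfl
            have hvalR : ∀ g : Fin ts.length → Option (List ℕ → ℤ),
                ((vg g (i :: q) : ℤ) : ℝ)
                  = (g ⟨i, h⟩).elim 0 (fun v => ((v q : ℤ) : ℝ)) := by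
              intro g
              rw [hvalZ g]
              cases g ⟨i, h⟩ <;> simp
            rw [Finset.sum_congr rfl (fun g _ => by rw [hvalR g]),
              ← Finset.sum_fiberwise_of_maps_to
                (fun g hg => Fintype.mem_piFinset.1 hg ⟨i, h⟩)
                (fun g => lam g * (g ⟨i, h⟩).elim 0 (fun v => ((v q : ℤ) : ℝ)))]
            have hin : ∀ o ∈ Ffam ⟨i, h⟩,
                ∑ g ∈ (Fintype.piFinset Ffam).filter (fun g => g ⟨i, h⟩ = o),
                  lam g * (g ⟨i, h⟩).elim 0 (fun v => ((v q : ℤ) : ℝ))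
                  = γ ⟨i, h⟩ o * o.elim 0 (fun v => ((v q : ℤ) : ℝ)) := by
              intro o ho
              rw [Finset.sum_congr rfl
                (fun g hg => by rw [(Finset.mem_filter.1 hg).2]),
                ← Finset.sum_mul, hfiber ⟨i, h⟩ o ho]
            rw [Finset.sum_congr rfl hin,
              show Ffam ⟨i, h⟩ = insert none ((F ⟨i, h⟩).image some) from rfl,
              Finset.sum_insert (by simp),
              Finset.sum_image (fun a _ b _ hab => Option.some.inj hab)]
            show x (i :: q) = γ ⟨i, h⟩ none * 0
              + ∑ v ∈ F ⟨i, h⟩, γ ⟨i, h⟩ (some v) * ((v q : ℤ) : ℝ)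
            rw [mul_zero, zero_add]
            exact hxptw ⟨i, h⟩ q
          · have hval0 : ∀ g : Fin ts.length → Option (List ℕ → ℤ),
                vg g (i :: q) = 0 := by
              intro g
              rw [show vg g (i :: q)
                = (e0 + ∑ j ∈ Finset.univ.filter (fun j => g j ≠ none),
                    (shift j.1 ((g j).getD 0) - e0)) (i :: q) from rfl]
              rw [repr_apply_cons, dif_neg h]
            rw [Finset.sum_congr rfl
              (fun g _ => by rw [hval0 g, Int.cast_zero, mul_zero]),
              Finset.sum_const_zero]
            apply hx.1
            intro hpu
            rcases mem_uncS_node.1 hpu with hnil | ⟨j, r, hjr, -⟩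
            · cases hnil
            · injection hjr with h1 h2
              exact h (h1 ▸ j.2)
      rw [hxeq]
      exact sum_mem_coneHull _ _
        (fun g hg => smul_gen_mem_coneHull (hvgG g hg) (hlamnn g hg))
  termination_by t => sizeOf t
  decreasing_by exact hsz i

end CTree


namespace CTree
variable {α : Type}

lemma pairR_finsum {ι : Type*} (t : CTree α) (μ : List ℕ → ℤ) (s : Finset ι)
    (f : ι → (List ℕ → ℝ)) :
    pairR t μ (∑ j ∈ s, f j) = ∑ j ∈ s, pairR t μ (f j) := by
  unfold pairR
  rw [Finset.sum_congr rfl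
    (fun p (_ : p ∈ uncS t) => by rw [Finset.sum_apply, Finset.mul_sum]),
    Finset.sum_comm]

lemma Gset_cast_sum {t : CTree α} {u : List ℕ → ℤ} (hu : u ∈ Gset t) :
    ∑ p ∈ uncS t, ((u p : ℤ) : ℝ) = 1 := by
  rw [← Int.cast_sum, Gset_sum t u hu, Int.cast_one]

lemma Gset_branch_cast {ts : List (CTree α)} {u : List ℕ → ℤ}
    (hu : u ∈ Gset (node ts)) (i : Fin ts.length) :
    (∑ q ∈ uncS (ts.get i), ((u (i.1 :: q) : ℤ) : ℝ)) = 0 ∨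
    (∑ q ∈ uncS (ts.get i), ((u (i.1 :: q) : ℤ) : ℝ)) = 1 := by
  obtain ⟨J, w, hJ, rfl⟩ := mem_Gset_node.1 hu
  rw [← Int.cast_sum, repr_branch_sum hJ i]
  split
  · right; exact Int.cast_one
  · left; exact Int.cast_zero

lemma Gset_principal_cast {ts : List (CTree α)} {u : List ℕ → ℤ}
    (hu : u ∈ Gset (node ts)) (i : Fin ts.length) :
    pairR (node ts) (wt (node ts) [i.1]) (fun p => ((u p : ℤ) : ℝ))
      = 1 - ∑ q ∈ uncS (ts.get i), ((u (i.1 :: q) : ℤ) : ℝ) := by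
  rw [pairR_wt_principal, Gset_cast_sum hu]

lemma Gset_extreme : ∀ (t : CTree α) (v : List ℕ → ℤ), v ∈ Gset t →
    ∀ (Fs : Finset (List ℕ → ℤ)) (c : (List ℕ → ℤ) → ℝ)
      (vec : (List ℕ → ℤ) → (List ℕ → ℤ)),
    (∀ j ∈ Fs, 0 ≤ c j) →
    (∀ j ∈ Fs, c j ≠ 0 → vec j ∈ Gset t) →
    ((fun p => ((v p : ℤ) : ℝ)) = ∑ j ∈ Fs, c j • (fun p => ((vec j p : ℤ) : ℝ))) →
    ∀ j ∈ Fs, c j ≠ 0 → vec j = v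
  | leaf a, v, hv, _, _, _, _, _, _, _, _, _ => absurd hv (by simp [Gset_leaf])
  | node ts, v, hv, Fs, c, vec, hcnn, hvec, hsum, j0, hj0, hcj0 => by
    have hsz : ∀ i : Fin ts.length, sizeOf (ts.get i) < sizeOf (node ts) := by
      intro i
      have h2 := List.sizeOf_lt_of_mem (List.get_mem ts ⟨i.1, i.2⟩)
      simp only [Fin.eta] at h2
      simp only [CTree.node.sizeOf_spec]
      omega
    obtain ⟨J, w, hJ, hvrepr⟩ := mem_Gset_node.1 hv
    have hptw : ∀ p, ((v p : ℤ) : ℝ) = ∑ j ∈ Fs, c j * ((vec j p : ℤ) : ℝ) := by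
      intro p
      have h := congrFun hsum p
      simpa [Finset.sum_apply] using h
    have hbr_v : ∀ i : Fin ts.length,
        ∑ q ∈ uncS (ts.get i), ((v (i.1 :: q) : ℤ) : ℝ) = if i ∈ J then 1 else 0 := by
      intro i
      rw [Finset.sum_congr rfl (fun q (_ : q ∈ uncS (ts.get i)) => by rw [hvrepr]),
        ← Int.cast_sum, repr_branch_sum hJ i]
      split <;> simp
    -- branch sums of the vec j
    have hS1 : ∀ i ∈ J, ∀ j ∈ Fs, c j ≠ 0 →
        ∑ q ∈ uncS (ts.get i), ((vec j (i.1 :: q) : ℤ) : ℝ) = 1 := by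
      intro i hi j hj hcj
      -- pairing with wt [i] vanishes on v, hence on each vec j with c j ≠ 0
      have hv0 : pairR (node ts) (wt (node ts) [i.1]) (fun p => ((v p : ℤ) : ℝ)) = 0 := by
        rw [Gset_principal_cast hv i, hbr_v i, if_pos hi]
        ring
      have hexp : pairR (node ts) (wt (node ts) [i.1]) (fun p => ((v p : ℤ) : ℝ))
          = ∑ j ∈ Fs, c j * pairR (node ts) (wt (node ts) [i.1])
              (fun p => ((vec j p : ℤ) : ℝ)) := by
        rw [show (fun p => ((v p : ℤ) : ℝ))
          = ∑ j ∈ Fs, c j • (fun p => ((vec j p : ℤ) : ℝ)) from hsum, pairR_finsum]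
        exact Finset.sum_congr rfl fun j _ => pairR_smul _ _ _ _
      have hterms : ∀ j ∈ Fs, 0 ≤ c j * pairR (node ts) (wt (node ts) [i.1])
          (fun p => ((vec j p : ℤ) : ℝ)) := by
        intro j hj'
        by_cases hcj' : c j = 0
        · rw [hcj', zero_mul]
        · refine mul_nonneg (hcnn j hj') ?_
          exact (Gset_subset_dualCone (node ts) (vec j) (hvec j hj' hcj')).2 [i.1]
            (mem_edgeS_node.2 ⟨i, [], rfl, nil_mem_vertS _⟩)
      have hall := (Finset.sum_eq_zero_iff_of_nonneg hterms).1 (hexp.symm.trans hv0)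
      have hpz : pairR (node ts) (wt (node ts) [i.1]) (fun p => ((vec j p : ℤ) : ℝ)) = 0 :=
        by
          rcases mul_eq_zero.1 (hall j hj) with h | h
          · exact absurd h hcj
          · exact h
      have := Gset_principal_cast (hvec j hj hcj) i
      rw [hpz] at this
      linarith
    have hS0 : ∀ i : Fin ts.length, i ∉ J → ∀ j ∈ Fs, c j ≠ 0 →
        ∑ q ∈ uncS (ts.get i), ((vec j (i.1 :: q) : ℤ) : ℝ) = 0 := by
      intro i hi j hj hcj
      have hv0 : ∑ q ∈ uncS (ts.get i), ((v (i.1 :: q) : ℤ) : ℝ) = 0 := by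
        rw [hbr_v i, if_neg hi]
      have hexch : ∑ q ∈ uncS (ts.get i), ((v (i.1 :: q) : ℤ) : ℝ)
          = ∑ j ∈ Fs, c j * ∑ q ∈ uncS (ts.get i), ((vec j (i.1 :: q) : ℤ) : ℝ) := by
        rw [Finset.sum_congr rfl
          (fun q (_ : q ∈ uncS (ts.get i)) => hptw (i.1 :: q)), Finset.sum_comm]
        exact Finset.sum_congr rfl fun j _ => (Finset.mul_sum _ _ _).symm
      have hterms : ∀ j ∈ Fs, 0 ≤ c j *
          ∑ q ∈ uncS (ts.get i), ((vec j (i.1 :: q) : ℤ) : ℝ) := by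
        intro j hj'
        by_cases hcj' : c j = 0
        · rw [hcj', zero_mul]
        · refine mul_nonneg (hcnn j hj') ?_
          rcases Gset_branch_cast (hvec j hj' hcj') i with h | h
          · rw [h]
          · rw [h]; norm_num
      have hall := (Finset.sum_eq_zero_iff_of_nonneg hterms).1 (hexch.symm.trans hv0)
      rcases mul_eq_zero.1 (hall j hj) with h | h
      · exact absurd h hcj
      · exact h
    -- components agree
    have hcomp : ∀ i ∈ J, (fun q => vec j0 (i.1 :: q)) = w i := by
      intro i hi
      have hszi := hsz i
      refine Gset_extreme (ts.get i) (w i) (hJ i hi).2 Fs c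
        (fun j => fun q => vec j (i.1 :: q)) hcnn ?_ ?_ j0 hj0 hcj0
      · intro j hj hcj
        obtain ⟨Jj, wj, hJj, hjrepr⟩ := mem_Gset_node.1 (hvec j hj hcj)
        have hmem : i ∈ Jj := by
          have hb := hS1 i hi j hj hcj
          rw [Finset.sum_congr rfl (fun q (_ : q ∈ uncS (ts.get i)) => by rw [hjrepr]),
            ← Int.cast_sum, repr_branch_sum hJj i] at hb
          by_contra hcon
          rw [if_neg hcon] at hb
          norm_num at hb
        have heq : (fun q => vec j (i.1 :: q)) = wj i := by
          funext q
          rw [hjrepr, repr_apply_cons_fin, if_pos hmem]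
        show (fun q => vec j (i.1 :: q)) ∈ _
        rw [heq]
        exact (hJj i hmem).2
      · funext q
        have hl : ((w i q : ℤ) : ℝ) = ((v (i.1 :: q) : ℤ) : ℝ) := by
          rw [hvrepr, repr_apply_cons_fin, if_pos hi]
        rw [hl, hptw (i.1 :: q), Finset.sum_apply]
        rfl
    -- the index set of vec j0 equals J
    obtain ⟨J', w', hJ', hrepr0⟩ := mem_Gset_node.1 (hvec j0 hj0 hcj0)
    have hbr0 : ∀ i : Fin ts.length,
        ∑ q ∈ uncS (ts.get i), ((vec j0 (i.1 :: q) : ℤ) : ℝ)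
          = if i ∈ J' then 1 else 0 := by
      intro i
      rw [Finset.sum_congr rfl (fun q (_ : q ∈ uncS (ts.get i)) => by rw [hrepr0]),
        ← Int.cast_sum, repr_branch_sum hJ' i]
      split <;> simp
    have hJJ : J' = J := by
      ext i
      constructor
      · intro hi'
        by_contra hi
        have h0 := hS0 i hi j0 hj0 hcj0
        rw [hbr0 i, if_pos hi'] at h0
        norm_num at h0
      · intro hi
        have h1 := hS1 i hi j0 hj0 hcj0
        rw [hbr0 i] at h1
        by_contra hi'
        rw [if_neg hi'] at h1
        norm_num at h1
    -- conclude
    funext p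
    cases p with
    | nil =>
      rw [hrepr0, hvrepr, repr_apply_nil, repr_apply_nil, hJJ]
    | cons i q =>
      by_cases h : i < ts.length
      · by_cases hi : (⟨i, h⟩ : Fin ts.length) ∈ J
        · have := congrFun (hcomp ⟨i, h⟩ hi) q
          rw [this]
          rw [hvrepr, repr_apply_cons, dif_pos h, if_pos hi]
        · rw [hrepr0, hvrepr, repr_apply_cons, repr_apply_cons, dif_pos h, dif_pos h,
            if_neg (hJJ ▸ hi : (⟨i, h⟩ : Fin ts.length) ∉ J'), if_neg hi]
      · rw [hrepr0, hvrepr, repr_apply_cons, repr_apply_cons, dif_neg h, dif_neg h]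
  termination_by t => sizeOf t
  decreasing_by exact hszi

end CTree

/-- The dual cone `C(Γ)` equals the convex cone generated by `G(Γ)`,
and `G(Γ)` is a minimal generating set: no proper subset of `G(Γ)` generates `C(Γ)`. -/
theorem dualCone_eq_coneHull_Gset_and_minimal {α : Type} (t : CTree α)
    (ht : t.IsColoredTree) :
    CTree.dualCone t = CTree.coneHull (CTree.Gset t) ∧
    ∀ S ⊆ CTree.Gset t, CTree.coneHull S = CTree.dualCone t → S = CTree.Gset t := by
  have heq : CTree.dualCone t = CTree.coneHull (CTree.Gset t) :=
    Set.Subset.antisymm (fun x hx => CTree.dualCone_subset_coneHull t ht x hx)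
      (CTree.coneHull_Gset_subset_dualCone t)
  refine ⟨heq, ?_⟩
  intro S hS hSe
  apply Set.Subset.antisymm hS
  intro v hv
  have hvC : (fun p => ((v p : ℤ) : ℝ)) ∈ CTree.coneHull S := by
    rw [hSe]
    exact CTree.Gset_subset_dualCone t v hv
  obtain ⟨F, c, hF, hc, hvs⟩ := hvC
  by_cases hall0 : ∀ j ∈ F, c j = 0
  · exfalso
    have hz : (fun p => ((v p : ℤ) : ℝ)) = 0 := by
      rw [hvs]
      exact Finset.sum_eq_zero fun j hj => by rw [hall0 j hj, zero_smul]
    have hsum1 := CTree.Gset_cast_sum hv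
    have h0 : ∑ p ∈ CTree.uncS t, ((v p : ℤ) : ℝ) = 0 :=
      Finset.sum_eq_zero fun p _ => congrFun hz p
    rw [hsum1] at h0
    norm_num at h0
  · push_neg at hall0
    obtain ⟨j, hjF, hcj⟩ := hall0
    have hje : id j = v :=
      CTree.Gset_extreme t v hv F c id hc
        (fun j hj _ => hS (hF (Finset.mem_coe.2 hj))) hvs j hjF hcj
    exact hje ▸ hF (Finset.mem_coe.2 hjF)
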